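/- Let κ ≠ 0 be a real number and define, for θ ∈ [0,π], g_κ(θ) = θ/κ − (π/κ) · (∫_0^θ e^{−κ cos φ} dφ) / (∫_0^π e^{−κ cos φ} dφ). Then g_κ(0) = 0, g_κ(π) = 0, and for every θ ∈ (0,π) the function θ ↦ e^{κ cos θ} g_κ'(θ) is differentiable with d/dθ ( e^{κ cos θ} g_κ'(θ) ) = − sin θ · e^{κ cos θ}. (This is the explicit solution of the generalized-collisional-invariant elliptic problem in dimension 2.) -/

import Mathlib

open Real intervalIntegral

/-- The explicit generalized collisional invariant in dimension 2:
`g_κ(θ) = θ/κ − (π/κ)·(∫_0^θ e^{−κcos φ} dφ)/(∫_0^π e^{−κcos φ} dφ)`. -/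
noncomputable def gci2D (κ : ℝ) (θ : ℝ) : ℝ :=
  θ / κ - (π / κ) *
    (∫ φ in (0:ℝ)..θ, Real.exp (-(κ * Real.cos φ))) /
    (∫ φ in (0:ℝ)..π, Real.exp (-(κ * Real.cos φ)))

/-- `g_κ` vanishes at `0` and `π` and solves
`(e^{κ cos θ} g_κ'(θ))' = −sin θ · e^{κ cos θ}` on `(0,π)`. -/
theorem gci2D_solves_elliptic_problem (κ : ℝ) (hκ : κ ≠ 0) :
    gci2D κ 0 = 0 ∧ gci2D κ π = 0 ∧
    ∀ θ ∈ Set.Ioo 0 π,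
      HasDerivAt (fun t => Real.exp (κ * Real.cos t) * deriv (gci2D κ) t)
        (-(Real.sin θ * Real.exp (κ * Real.cos θ))) θ := by
  set f : ℝ → ℝ := fun φ => Real.exp (-(κ * Real.cos φ)) with hf
  have hfc : Continuous f := by fun_prop
  set I : ℝ := ∫ φ in (0:ℝ)..π, f φ with hI
  have hIpos : 0 < I :=
    intervalIntegral.intervalIntegral_pos_of_pos (hfc.intervalIntegrable 0 π)
      (fun x => Real.exp_pos _) Real.pi_pos
  have hI0 : I ≠ 0 := ne_of_gt hIpos
  have hderiv : ∀ t : ℝ, HasDerivAt (gci2D κ) (1/κ - (π/κ) * f t / I) t := by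
    intro t
    have hF : HasDerivAt (fun u => ∫ φ in (0:ℝ)..u, f φ) (f t) t :=
      intervalIntegral.integral_hasDerivAt_right (hfc.intervalIntegrable 0 t)
        (hfc.stronglyMeasurableAtFilter _ _) hfc.continuousAt
    have h1 : HasDerivAt (fun u : ℝ => u / κ) (1/κ) t := by
      simpa using (hasDerivAt_id t).div_const κ
    exact h1.sub ((hF.const_mul (π/κ)).div_const I)
  refine ⟨by simp [gci2D], ?_, ?_⟩
  · have h2 : gci2D κ π = π/κ - (π/κ) * I / I := rfl
    rw [h2, mul_div_assoc, div_self hI0, mul_one, sub_self]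
  · intro θ hθ
    have heq : (fun t => Real.exp (κ * Real.cos t) * deriv (gci2D κ) t)
        = fun t => Real.exp (κ * Real.cos t) / κ - π / (κ * I) := by
      funext t
      rw [(hderiv t).deriv, hf]
      simp only []
      rw [Real.exp_neg]
      field_simp
    rw [heq]
    have hc : HasDerivAt (fun t => κ * Real.cos t) (κ * (-Real.sin θ)) θ :=
      (Real.hasDerivAt_cos θ).const_mul κ
    have he : HasDerivAt (fun t => Real.exp (κ * Real.cos t))
        (Real.exp (κ * Real.cos θ) * (κ * (-Real.sin θ))) θ :=
      (Real.hasDerivAt_exp _).comp θ hc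
    have h3 := (he.div_const κ).sub_const (π / (κ * I))
    refine h3.congr_deriv ?_
    rw [mul_div_assoc, mul_div_cancel_left₀ _ hκ]
    ring
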